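/- In a strict finite normal-form game, every sink equilibrium C of the preference graph contains a sink equilibrium of the best-response graph: there exists a strongly connected component C' of the best-response graph with no outgoing best-response arcs such that C' ⊆ C. Consequently the best-response graph has at least as many sink equilibria as the preference graph. -/
import Mathlib


open Function

/-- Two distinct profiles are `i`-comparable if they differ only in the strategy of player `i`. -/
def IComp {N : ℕ} {S : Fin N → Type*} (i : Fin N) (p q : ∀ j, S j) : Prop :=
  p ≠ q ∧ ∀ j, j ≠ i → p j = q j

/-- A game is strict if `i`-comparable profiles never give player `i` equal payoff. -/
def StrictGame {N : ℕ} {S : Fin N → Type*} (u : Fin N → (∀ j, S j) → ℝ) : Prop :=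
  ∀ i p q, IComp i p q → u i p ≠ u i q

/-- Arc of the preference graph. -/
def PrefArc {N : ℕ} {S : Fin N → Type*} (u : Fin N → (∀ j, S j) → ℝ)
    (p q : ∀ j, S j) : Prop :=
  ∃ i, IComp i p q ∧ u i p < u i q

/-- Arc of the best-response graph: the subgraph of the preference graph whose arcs
`p → q` (for `i`-comparable `p, q`) satisfy `u i q ≥ u i (s; p₋ᵢ)` for all `s`. -/
def BRArc {N : ℕ} {S : Fin N → Type*} (u : Fin N → (∀ j, S j) → ℝ)
    (p q : ∀ j, S j) : Prop :=
  ∃ i, IComp i p q ∧ u i p < u i q ∧ ∀ s : S i, u i (update p i s) ≤ u i q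

/-- A sink equilibrium of a directed graph (given by its arc relation `A`): a nonempty
set of nodes that is closed under arcs and in which every node can reach every other
by a directed path.  (Such a set is exactly a strongly connected component with no
outgoing arcs.) -/
def IsSinkEqG {α : Type*} (A : α → α → Prop) (C : Set α) : Prop :=
  C.Nonempty ∧ (∀ p ∈ C, ∀ q, A p q → q ∈ C) ∧
    ∀ p ∈ C, ∀ q ∈ C, Relation.ReflTransGen A p q

/-- In a strict finite game, every sink equilibrium of the preference graph contains a
sink equilibrium of the best-response graph; consequently the best-response graph has at
least as many sink equilibria as the preference graph. -/
theorem sink_equilibrium_contains_br_sink_equilibrium {N : ℕ} {S : Fin N → Type*}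
    [∀ i, Fintype (S i)] [∀ i, Nonempty (S i)]
    (u : Fin N → (∀ j, S j) → ℝ) (hu : StrictGame u) :
    (∀ C : Set (∀ j, S j), IsSinkEqG (PrefArc u) C →
      ∃ C' : Set (∀ j, S j), IsSinkEqG (BRArc u) C' ∧ C' ⊆ C) ∧
    Nat.card {C : Set (∀ j, S j) // IsSinkEqG (PrefArc u) C} ≤
      Nat.card {C : Set (∀ j, S j) // IsSinkEqG (BRArc u) C} := by
  classical
  have hBP : ∀ p q, BRArc u p q → PrefArc u p q := by
    rintro p q ⟨i, h1, h2, _⟩; exact ⟨i, h1, h2⟩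
  have main : ∀ C : Set (∀ j, S j), IsSinkEqG (PrefArc u) C →
      ∃ C', IsSinkEqG (BRArc u) C' ∧ C' ⊆ C := by
    rintro C ⟨⟨p0, hp0⟩, hclosed, hreach⟩
    have hclB : ∀ p ∈ C, ∀ q, Relation.ReflTransGen (BRArc u) p q → q ∈ C := by
      intro p hp q hpq
      induction hpq with
      | refl => exact hp
      | tail h1 h2 ih => exact hclosed _ ih _ (hBP _ _ h2)
    set R := Relation.ReflTransGen (BRArc u) with hR
    set f : (∀ j, S j) → ℕ := fun q => Set.ncard {r | R q r} with hf
    obtain ⟨q, hqC, hqmin⟩ := Set.exists_min_image C f (Set.toFinite C) ⟨p0, hp0⟩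
    have hrec : ∀ r, R q r → R r q := by
      intro r hqr
      by_contra hrq
      have hsub : {x | R r x} ⊂ {x | R q x} := by
        constructor
        · intro x hx; exact hqr.trans hx
        · intro hsup
          exact hrq (hsup (Relation.ReflTransGen.refl))
      have hlt := Set.ncard_lt_ncard hsub (Set.toFinite _)
      have hrC : r ∈ C := hclB q hqC r hqr
      have := hqmin r hrC
      simp only [hf] at this
      omega
    refine ⟨{r | R q r ∧ R r q},
      ⟨⟨q, Relation.ReflTransGen.refl, Relation.ReflTransGen.refl⟩, ?_, ?_⟩, ?_⟩
    · rintro p ⟨hqp, hpq⟩ s hs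
      have hqs : R q s := hqp.tail hs
      exact ⟨hqs, hrec s hqs⟩
    · rintro p ⟨_, hpq⟩ r ⟨hqr, _⟩
      exact hpq.trans hqr
    · rintro r ⟨hqr, _⟩
      exact hclB q hqC r hqr
  refine ⟨main, ?_⟩
  have hex : ∀ C : {C : Set (∀ j, S j) // IsSinkEqG (PrefArc u) C},
      ∃ C' : {C : Set (∀ j, S j) // IsSinkEqG (BRArc u) C}, (C' : Set _) ⊆ (C.1 : Set _) := by
    rintro ⟨C, hC⟩
    obtain ⟨C', h1, h2⟩ := main C hC
    exact ⟨⟨C', h1⟩, h2⟩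
  choose g hg using hex
  have hinj : Function.Injective g := by
    intro C1 C2 h
    obtain ⟨x, hx⟩ := (g C1).2.1
    have hx1 : x ∈ (C1 : Set _) := hg C1 hx
    have hx2 : x ∈ (C2 : Set _) := hg C2 (by rw [← h]; exact hx)
    ext1
    ext y
    constructor
    · intro hy
      have hpath := C1.2.2.2 x hx1 y hy
      clear hy
      induction hpath with
      | refl => exact hx2
      | tail h1 h2 ih => exact C2.2.2.1 _ ih _ h2
    · intro hy
      have hpath := C2.2.2.2 x hx2 y hy
      clear hy
      induction hpath with
      | refl => exact hx1
      | tail h1 h2 ih => exact C1.2.2.1 _ ih _ h2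
  exact Nat.card_le_card_of_injective g hinj
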